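/- Merging Pareto fronts: let A, B ⊆ ℝ² be the Pareto fronts of finite sets S_A, S_B. Define S = { (max(t₁,t₂), e₁ + e₂) : (t₁,e₁) ∈ S_A, (t₂,e₂) ∈ S_B }. Then the Pareto front of S equals the Pareto front of { (max(t₁,t₂), e₁ + e₂) : (t₁,e₁) ∈ A, (t₂,e₂) ∈ B }; i.e., it suffices to combine only Pareto-optimal points of the two parts. -/

import Mathlib

/-- Every point of a finite set is dominated (weakly) by a Pareto-optimal
point of the set. -/
lemma exists_pareto_le (S : Set (ℝ × ℝ)) (hS : S.Finite) (p : ℝ × ℝ) (hp : p ∈ S) :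
    ∃ m ∈ S, m.1 ≤ p.1 ∧ m.2 ≤ p.2 ∧
      ¬∃ q ∈ S, q.1 ≤ m.1 ∧ q.2 ≤ m.2 ∧ q ≠ m := by
  have hT : ({q ∈ S | q ≤ p} : Set (ℝ × ℝ)).Finite := hS.subset (fun x hx => hx.1)
  obtain ⟨m, hm, hmin⟩ := Set.Finite.exists_minimalFor id _ hT ⟨p, hp, le_refl p⟩
  refine ⟨m, hm.1, hm.2.1, hm.2.2, ?_⟩
  rintro ⟨q, hq, h1, h2, hne⟩
  have hqm : q ≤ m := Prod.le_def.mpr ⟨h1, h2⟩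
  have : m = q := le_antisymm (hmin ⟨hq, le_trans hqm hm.2⟩ hqm) hqm
  exact hne this.symm

theorem merge_pareto_fronts
    (SA SB : Set (ℝ × ℝ)) (hA : SA.Finite) (hB : SB.Finite) :
    let pareto : Set (ℝ × ℝ) → Set (ℝ × ℝ) := fun S =>
      {p | p ∈ S ∧ ¬∃ q ∈ S, q.1 ≤ p.1 ∧ q.2 ≤ p.2 ∧ q ≠ p}
    let comb : Set (ℝ × ℝ) → Set (ℝ × ℝ) → Set (ℝ × ℝ) := fun S T =>
      {r | ∃ p ∈ S, ∃ q ∈ T, r = (max p.1 q.1, p.2 + q.2)}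
    pareto (comb SA SB) = pareto (comb (pareto SA) (pareto SB)) := by
  intro pareto comb
  -- C' ⊆ C
  have hsub : comb (pareto SA) (pareto SB) ⊆ comb SA SB := by
    rintro r ⟨p, hp, q, hq, rfl⟩
    exact ⟨p, hp.1, q, hq.1, rfl⟩
  -- domination: every point of C is dominated by a point of C'
  have hdom : ∀ r ∈ comb SA SB, ∃ r' ∈ comb (pareto SA) (pareto SB),
      r'.1 ≤ r.1 ∧ r'.2 ≤ r.2 := by
    rintro r ⟨p, hp, q, hq, rfl⟩
    obtain ⟨p', hp', hp1, hp2, hpmin⟩ := exists_pareto_le SA hA p hp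
    obtain ⟨q', hq', hq1, hq2, hqmin⟩ := exists_pareto_le SB hB q hq
    refine ⟨(max p'.1 q'.1, p'.2 + q'.2), ⟨p', ⟨hp', hpmin⟩, q', ⟨hq', hqmin⟩, rfl⟩, ?_, ?_⟩
    · exact max_le_max hp1 hq1
    · exact add_le_add hp2 hq2
  ext r
  constructor
  · rintro ⟨hrC, hropt⟩
    obtain ⟨r', hr', h1, h2⟩ := hdom r hrC
    have hrr : r' = r := by
      by_contra hne
      exact hropt ⟨r', hsub hr', h1, h2, hne⟩
    subst hrr
    refine ⟨hr', ?_⟩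
    rintro ⟨q, hqC', hq1, hq2, hne⟩
    exact hropt ⟨q, hsub hqC', hq1, hq2, hne⟩
  · rintro ⟨hrC', hropt⟩
    refine ⟨hsub hrC', ?_⟩
    rintro ⟨q, hqC, hq1, hq2, hne⟩
    obtain ⟨q', hq', h1, h2⟩ := hdom q hqC
    by_cases hqr : q' = r
    · have e1 : q.1 = r.1 := le_antisymm hq1 (hqr ▸ h1)
      have e2 : q.2 = r.2 := le_antisymm hq2 (hqr ▸ h2)
      exact hne (Prod.ext e1 e2)
    · exact hropt ⟨q', hq', le_trans h1 hq1, le_trans h2 hq2, hqr⟩
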